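/- For a, b ∈ Dⁿ, the probability distribution assigning mass 1/2 to a∧₀b, α/2 to a∨₀b, and (1-α)/2 to a∨₁b (with coinciding points accumulating their masses) has marginal (a+b)/2; consequently, if these three points form a chain, the Lovász extension satisfies f^L((a+b)/2) = ½ f(a∧₀b) + (α/2) f(a∨₀b) + ((1-α)/2) f(a∨₁b). -/

import Mathlib

open Finset

/-- The three-element domain `D = {-α, 0, 1}`, abstractly. -/
inductive D3 : Type
  | neg : D3
  | zero : D3
  | one : D3
deriving DecidableEq

instance : Fintype D3 :=
  ⟨{D3.neg, D3.zero, D3.one}, by rintro (_ | _ | _) <;> simp⟩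

namespace D3

/-- The embedding of `D3` into `ℝ` sending `neg ↦ -α`, `zero ↦ 0`, `one ↦ 1`. -/
def emb (α : ℝ) : D3 → ℝ
  | neg => -α
  | zero => 0
  | one => 1

/-- The partial order `0 ≺ 1`, `0 ≺ -α`, with `1` and `-α` incomparable. -/
instance : PartialOrder D3 where
  le x y := x = y ∨ x = zero
  le_refl x := Or.inl rfl
  le_trans x y z hxy hyz := by
    rcases hxy with rfl | rfl
    · exact hyz
    · exact Or.inr rfl
  le_antisymm x y hxy hyx := by
    rcases hxy with rfl | rfl
    · rfl
    · rcases hyx with rfl | rfl <;> rfl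

/-- `∧₀` : `1 ∧₀ (-α) = (-α) ∧₀ 1 = 0`, and min w.r.t. `≺` otherwise. -/
def meet0 (x y : D3) : D3 := if x = y then x else zero

/-- `∨₀` : `1 ∨₀ (-α) = (-α) ∨₀ 1 = 0`, and max w.r.t. `≺` otherwise. -/
def join0 (x y : D3) : D3 :=
  if x = y then x else if x = zero then y else if y = zero then x else zero

/-- `∨₁` : `1 ∨₁ (-α) = (-α) ∨₁ 1 = 1`, and max w.r.t. `≺` otherwise. -/
def join1 (x y : D3) : D3 :=
  if x = y then x else if x = zero then y else if y = zero then x else one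

end D3

/-- Componentwise `∧₀` on `Dⁿ`. -/
def vmeet0 {n : ℕ} (a b : Fin n → D3) : Fin n → D3 := fun i => D3.meet0 (a i) (b i)

/-- Componentwise `∨₀` on `Dⁿ`. -/
def vjoin0 {n : ℕ} (a b : Fin n → D3) : Fin n → D3 := fun i => D3.join0 (a i) (b i)

/-- Componentwise `∨₁` on `Dⁿ`. -/
def vjoin1 {n : ℕ} (a b : Fin n → D3) : Fin n → D3 := fun i => D3.join1 (a i) (b i)

/-- `lam` is a probability distribution on `Dⁿ`. -/
def IsDist (n : ℕ) (lam : (Fin n → D3) → ℝ) : Prop :=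
  (∀ a, 0 ≤ lam a ∧ lam a ≤ 1) ∧ ∑ a : Fin n → D3, lam a = 1

/-- `lam` has marginal vector `x`, i.e. `Σ_a lam(a)·a = x` in `ℝⁿ`. -/
def HasMarginal (α : ℝ) (n : ℕ) (lam : (Fin n → D3) → ℝ) (x : Fin n → ℝ) : Prop :=
  ∀ i, ∑ a : Fin n → D3, lam a * D3.emb α (a i) = x i

/-- The support of `lam` forms a chain w.r.t. the componentwise order on `Dⁿ`. -/
def ChainSupp (n : ℕ) (lam : (Fin n → D3) → ℝ) : Prop :=
  ∀ a b : Fin n → D3, lam a ≠ 0 → lam b ≠ 0 → a ≤ b ∨ b ≤ a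

/-- The box `[-α,1]ⁿ`. -/
def Box (α : ℝ) (n : ℕ) : Set (Fin n → ℝ) := {x | ∀ i, x i ∈ Set.Icc (-α) 1}

/-- `f : Dⁿ → ℝ` is α-bisubmodular. -/
def AlphaBisub (α : ℝ) (n : ℕ) (f : (Fin n → D3) → ℝ) : Prop :=
  ∀ a b : Fin n → D3,
    f (vmeet0 a b) + α * f (vjoin0 a b) + (1 - α) * f (vjoin1 a b) ≤ f a + f b

/-- Number of zero coordinates. -/
def zc {n : ℕ} (c : Fin n → D3) : ℕ := (Finset.univ.filter fun i => c i = D3.zero).card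

/-- The convex closure `f⁻(x)`. -/
noncomputable def cClos (α : ℝ) (n : ℕ) (f : (Fin n → D3) → ℝ) (x : Fin n → ℝ) : ℝ :=
  sInf {y | ∃ lam, IsDist n lam ∧ HasMarginal α n lam x ∧ y = ∑ a : Fin n → D3, lam a * f a}

namespace Stmt9Aux

lemma d3_le {x y : D3} (h : x ≤ y) : x = y ∨ x = D3.zero := h

noncomputable def Mv {n : ℕ} (lam : (Fin n → D3) → ℝ) (i : Fin n) (v : D3) : ℝ :=
  ∑ c : Fin n → D3, if c i = v then lam c else 0

lemma mv_nonneg {n : ℕ} {lam : (Fin n → D3) → ℝ} (hd : IsDist n lam) (i : Fin n) (v : D3) :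
    0 ≤ Mv lam i v := by
  apply Finset.sum_nonneg
  intro c _
  split
  · exact (hd.1 c).1
  · exact le_rfl

lemma lam_pos {n : ℕ} {lam : (Fin n → D3) → ℝ} (hd : IsDist n lam) {c : Fin n → D3}
    (h : lam c ≠ 0) : 0 < lam c :=
  lt_of_le_of_ne (hd.1 c).1 (Ne.symm h)

/-- Key upset lemma: on a chain, mass-comparable "nonzero-coordinate" upsets are nested. -/
lemma key {n : ℕ} {lam : (Fin n → D3) → ℝ} (hd : IsDist n lam) (hc : ChainSupp n lam)
    {i j : Fin n} {v w : D3} (hv : v ≠ D3.zero) (hw : w ≠ D3.zero)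
    (hle : Mv lam i v ≤ Mv lam j w) :
    ∀ c, lam c ≠ 0 → c i = v → c j = w := by
  intro c hcne hciv
  by_contra hcjw
  have hstep : Mv lam j w ≤ Mv lam i v - lam c := by
    have h1 : Mv lam i v - lam c
        = ∑ d : Fin n → D3, ((if d i = v then lam d else 0) - (if d = c then lam d else 0)) := by
      rw [Finset.sum_sub_distrib]
      congr 1
      rw [Finset.sum_ite_eq' Finset.univ c lam]
      simp
    rw [h1]
    apply Finset.sum_le_sum
    intro d _
    by_cases hdc : d = c
    · subst hdc
      simp [hciv, hcjw]
    · simp only [hdc, if_false, sub_zero]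
      by_cases hld : lam d = 0
      · simp [hld]
      · by_cases hdjw : d j = w
        · rcases hc c d hcne hld with hcd | hdc2
          · rcases d3_le (hcd i) with h | h
            · rw [hciv] at h
              simp [hdjw, ← h]
            · exact absurd (hciv ▸ h) hv
          · rcases d3_le (hdc2 j) with h | h
            · exact absurd (hdjw ▸ h.symm) hcjw
            · exact absurd (hdjw ▸ h) hw
        · simp only [hdjw, if_false]
          split
          · exact (hd.1 d).1
          · exact le_rfl
  have := lam_pos hd hcne
  linarith

lemma single_le_mv {n : ℕ} {lam : (Fin n → D3) → ℝ} (hd : IsDist n lam) {i : Fin n} {v : D3}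
    {c : Fin n → D3} (hciv : c i = v) : lam c ≤ Mv lam i v := by
  have h := Finset.single_le_sum (f := fun d : Fin n → D3 => if d i = v then lam d else 0)
    (fun d _ => by split; exacts [(hd.1 d).1, le_rfl]) (Finset.mem_univ c)
  simpa [hciv, Mv] using h

lemma zero_mass {n : ℕ} {lam : (Fin n → D3) → ℝ} (hd : IsDist n lam) {i : Fin n} {v : D3}
    (h0 : Mv lam i v = 0) : ∀ c, lam c ≠ 0 → c i ≠ v := by
  intro c hcne hciv
  have := single_le_mv hd hciv
  rw [h0] at this
  exact hcne (le_antisymm this (hd.1 c).1)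

lemma full_mass {n : ℕ} {lam : (Fin n → D3) → ℝ} (hd : IsDist n lam) {i : Fin n} {v : D3}
    (h1 : Mv lam i v = 1) : ∀ c, lam c ≠ 0 → c i = v := by
  have h0 : ∑ c : Fin n → D3, (lam c - if c i = v then lam c else 0) = 0 := by
    rw [Finset.sum_sub_distrib, hd.2]
    rw [show ∑ c : Fin n → D3, (if c i = v then lam c else 0) = Mv lam i v from rfl, h1]
    ring
  have hz := (Finset.sum_eq_zero_iff_of_nonneg ?_).mp h0
  · intro c hcne
    by_contra hne
    have := hz c (Finset.mem_univ c)
    simp [hne] at this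
    exact hcne this
  · intro c _
    split
    · simp
    · simp [(hd.1 c).1]

noncomputable def eone (α : ℝ) : D3 → D3 → ℝ
  | .one, .one => 1
  | .one, .zero => 1/2
  | .zero, .one => 1/2
  | .one, .neg => (1-α)/2
  | .neg, .one => (1-α)/2
  | .zero, .zero => 0
  | .neg, .zero => 0
  | .zero, .neg => 0
  | .neg, .neg => 0

noncomputable def eneg (α : ℝ) : D3 → D3 → ℝ
  | .neg, .neg => 1
  | .neg, .zero => 1/2
  | .zero, .neg => 1/2
  | .one, .one => 0
  | .one, .zero => 0
  | .zero, .one => 0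
  | .one, .neg => 0
  | .neg, .one => 0
  | .zero, .zero => 0

lemma mass_eq {α : ℝ} (hα : α ∈ Set.Ioc (0 : ℝ) 1) {n : ℕ} {a b : Fin n → D3}
    {lam : (Fin n → D3) → ℝ} (hd : IsDist n lam) (hc : ChainSupp n lam)
    (hm : HasMarginal α n lam (fun i => (D3.emb α (a i) + D3.emb α (b i)) / 2)) (i : Fin n) :
    Mv lam i D3.one = eone α (a i) (b i) ∧ Mv lam i D3.neg = eneg α (a i) (b i) := by
  have hmarg : Mv lam i D3.one - α * Mv lam i D3.neg = (D3.emb α (a i) + D3.emb α (b i)) / 2 := by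
    have hmi := hm i
    dsimp only at hmi
    rw [← hmi]
    unfold Mv
    rw [Finset.mul_sum, ← Finset.sum_sub_distrib]
    apply Finset.sum_congr rfl
    intro c _
    cases hci : c i <;> simp [D3.emb, hci] <;> ring
  have h1 : 0 ≤ Mv lam i D3.one := mv_nonneg hd i _
  have h2 : 0 ≤ Mv lam i D3.neg := mv_nonneg hd i _
  have h3 : Mv lam i D3.one + Mv lam i D3.neg ≤ 1 := by
    rw [← hd.2]
    unfold Mv
    rw [← Finset.sum_add_distrib]
    apply Finset.sum_le_sum
    intro c _
    cases hci : c i <;> simp [hci, (hd.1 c).1]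
  have h4 : Mv lam i D3.one = 0 ∨ Mv lam i D3.neg = 0 := by
    by_contra hcon
    push_neg at hcon
    obtain ⟨c, hcmem⟩ := Finset.exists_ne_zero_of_sum_ne_zero hcon.1
    obtain ⟨d, hdmem⟩ := Finset.exists_ne_zero_of_sum_ne_zero hcon.2
    have hc1 : c i = D3.one ∧ lam c ≠ 0 := by
      by_cases h : c i = D3.one
      · exact ⟨h, by simpa [h] using hcmem⟩
      · simp [h] at hcmem
    have hd1 : d i = D3.neg ∧ lam d ≠ 0 := by
      by_cases h : d i = D3.neg
      · exact ⟨h, by simpa [h] using hdmem⟩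
      · simp [h] at hdmem
    rcases hc c d hc1.2 hd1.2 with hle | hle
    · rcases d3_le (hle i) with h | h <;> simp [hc1.1, hd1.1] at h
    · rcases d3_le (hle i) with h | h <;> simp [hc1.1, hd1.1] at h
  have hα1 := hα.1
  have hα2 := hα.2
  cases hai : a i <;> cases hbi : b i <;>
    simp only [hai, hbi, D3.emb, eone, eneg] at hmarg ⊢ <;>
    constructor <;> rcases h4 with h4 | h4 <;> nlinarith

end Stmt9Aux

namespace Stmt9Aux

lemma meet_join_emb (α : ℝ) (x y : D3) :
    1/2 * D3.emb α (D3.meet0 x y) + α/2 * D3.emb α (D3.join0 x y)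
      + (1-α)/2 * D3.emb α (D3.join1 x y) = (D3.emb α x + D3.emb α y) / 2 := by
  cases x <;> cases y <;> simp [D3.meet0, D3.join0, D3.join1, D3.emb] <;> ring

lemma classify {α : ℝ} (hα : α ∈ Set.Ioc (0 : ℝ) 1) {n : ℕ} {a b : Fin n → D3}
    {lam : (Fin n → D3) → ℝ} (hd : IsDist n lam) (hc : ChainSupp n lam)
    (hm : HasMarginal α n lam (fun i => (D3.emb α (a i) + D3.emb α (b i)) / 2)) :
    ∀ c, lam c ≠ 0 → c = vmeet0 a b ∨ c = vjoin0 a b ∨ c = vjoin1 a b := by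
  classical
  intro c hcne
  have hM := fun i => mass_eq hα hd hc hm i
  by_cases h1 : ∃ i, ((a i = D3.one ∧ b i = D3.neg) ∨ (a i = D3.neg ∧ b i = D3.one))
      ∧ c i = D3.one
  · right; right
    obtain ⟨i0, hT0, hc0⟩ := h1
    have hMi0 : Mv lam i0 D3.one = (1-α)/2 := by
      rcases hT0 with ⟨ha0, hb0⟩ | ⟨ha0, hb0⟩ <;> rw [(hM i0).1, ha0, hb0] <;> simp [eone]
    funext i
    show c i = D3.join1 (a i) (b i)
    cases hai : a i <;> cases hbi : b i <;> simp [D3.join1, hai, hbi]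
    · exact key hd hc (by decide) (by decide)
        (by rw [hMi0, (hM i).2, hai, hbi]; simp [eneg] <;> linarith [hα.1, hα.2]) c hcne hc0
    · exact key hd hc (by decide) (by decide)
        (by rw [hMi0, (hM i).2, hai, hbi]; simp [eneg] <;> linarith [hα.1, hα.2]) c hcne hc0
    · exact key hd hc (by decide) (by decide)
        (by rw [hMi0, (hM i).1, hai, hbi]; simp [eone] <;> linarith [hα.1, hα.2]) c hcne hc0
    · exact key hd hc (by decide) (by decide)
        (by rw [hMi0, (hM i).2, hai, hbi]; simp [eneg] <;> linarith [hα.1, hα.2]) c hcne hc0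
    · (have hz1 := zero_mass hd (by rw [(hM i).1, hai, hbi]; simp [eone]) c hcne
       have hz2 := zero_mass hd (by rw [(hM i).2, hai, hbi]; simp [eneg]) c hcne
       cases hcid : c i
       · exact absurd hcid hz2
       · rfl
       · exact absurd hcid hz1)
    · exact key hd hc (by decide) (by decide)
        (by rw [hMi0, (hM i).1, hai, hbi]; simp [eone] <;> linarith [hα.1, hα.2]) c hcne hc0
    · exact key hd hc (by decide) (by decide)
        (by rw [hMi0, (hM i).1, hai, hbi]; simp [eone] <;> linarith [hα.1, hα.2]) c hcne hc0
    · exact key hd hc (by decide) (by decide)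
        (by rw [hMi0, (hM i).1, hai, hbi]; simp [eone] <;> linarith [hα.1, hα.2]) c hcne hc0
    · exact key hd hc (by decide) (by decide)
        (by rw [hMi0, (hM i).1, hai, hbi]; simp [eone] <;> linarith [hα.1, hα.2]) c hcne hc0
  · by_cases h2 : ∃ i, ((a i = D3.one ∧ b i = D3.zero) ∨ (a i = D3.zero ∧ b i = D3.one)
        ∨ (a i = D3.neg ∧ b i = D3.zero) ∨ (a i = D3.zero ∧ b i = D3.neg)) ∧ c i ≠ D3.zero
    · right; left
      push_neg at h1
      obtain ⟨i1, hH1, hc1ne⟩ := h2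
      obtain ⟨v1, hv1ne, hc1, hmass1⟩ :
          ∃ v1, v1 ≠ D3.zero ∧ c i1 = v1 ∧ Mv lam i1 v1 = 1/2 := by
        rcases hH1 with ⟨ha1, hb1⟩ | ⟨ha1, hb1⟩ | ⟨ha1, hb1⟩ | ⟨ha1, hb1⟩
        · have hzn := zero_mass hd (by rw [(hM i1).2, ha1, hb1]; simp [eneg]) c hcne
          refine ⟨D3.one, by decide, ?_, by rw [(hM i1).1, ha1, hb1]; simp [eone]⟩
          cases hcid : c i1
          · exact absurd hcid hzn
          · exact absurd hcid hc1ne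
          · rfl
        · have hzn := zero_mass hd (by rw [(hM i1).2, ha1, hb1]; simp [eneg]) c hcne
          refine ⟨D3.one, by decide, ?_, by rw [(hM i1).1, ha1, hb1]; simp [eone]⟩
          cases hcid : c i1
          · exact absurd hcid hzn
          · exact absurd hcid hc1ne
          · rfl
        · have hzo := zero_mass hd (by rw [(hM i1).1, ha1, hb1]; simp [eone]) c hcne
          refine ⟨D3.neg, by decide, ?_, by rw [(hM i1).2, ha1, hb1]; simp [eneg]⟩
          cases hcid : c i1
          · rfl
          · exact absurd hcid hc1ne
          · exact absurd hcid hzo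
        · have hzo := zero_mass hd (by rw [(hM i1).1, ha1, hb1]; simp [eone]) c hcne
          refine ⟨D3.neg, by decide, ?_, by rw [(hM i1).2, ha1, hb1]; simp [eneg]⟩
          cases hcid : c i1
          · rfl
          · exact absurd hcid hc1ne
          · exact absurd hcid hzo
      funext i
      show c i = D3.join0 (a i) (b i)
      cases hai : a i <;> cases hbi : b i <;> simp [D3.join0, hai, hbi]
      · exact key hd hc hv1ne (by decide)
          (by rw [hmass1, (hM i).2, hai, hbi]; simp [eneg] <;> linarith [hα.1, hα.2]) c hcne hc1
      · exact key hd hc hv1ne (by decide)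
          (by rw [hmass1, (hM i).2, hai, hbi]; simp [eneg] <;> linarith [hα.1, hα.2]) c hcne hc1
      · (have hz := zero_mass hd (by rw [(hM i).2, hai, hbi]; simp [eneg]) c hcne
         have ho := h1 i (Or.inr ⟨hai, hbi⟩)
         cases hcid : c i
         · exact absurd hcid hz
         · rfl
         · exact absurd hcid ho)
      · exact key hd hc hv1ne (by decide)
          (by rw [hmass1, (hM i).2, hai, hbi]; simp [eneg] <;> linarith [hα.1, hα.2]) c hcne hc1
      · (have hz1 := zero_mass hd (by rw [(hM i).1, hai, hbi]; simp [eone]) c hcne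
         have hz2 := zero_mass hd (by rw [(hM i).2, hai, hbi]; simp [eneg]) c hcne
         cases hcid : c i
         · exact absurd hcid hz2
         · rfl
         · exact absurd hcid hz1)
      · exact key hd hc hv1ne (by decide)
          (by rw [hmass1, (hM i).1, hai, hbi]; simp [eone] <;> linarith [hα.1, hα.2]) c hcne hc1
      · (have hz := zero_mass hd (by rw [(hM i).2, hai, hbi]; simp [eneg]) c hcne
         have ho := h1 i (Or.inl ⟨hai, hbi⟩)
         cases hcid : c i
         · exact absurd hcid hz
         · rfl
         · exact absurd hcid ho)
      · exact key hd hc hv1ne (by decide)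
          (by rw [hmass1, (hM i).1, hai, hbi]; simp [eone] <;> linarith [hα.1, hα.2]) c hcne hc1
      · exact key hd hc hv1ne (by decide)
          (by rw [hmass1, (hM i).1, hai, hbi]; simp [eone] <;> linarith [hα.1, hα.2]) c hcne hc1
    · left
      push_neg at h1 h2
      funext i
      show c i = D3.meet0 (a i) (b i)
      cases hai : a i <;> cases hbi : b i <;> simp [D3.meet0, hai, hbi]
      · exact full_mass hd (by rw [(hM i).2, hai, hbi]; simp [eneg]) c hcne
      · exact h2 i (Or.inr (Or.inr (Or.inl ⟨hai, hbi⟩)))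
      · (have hz := zero_mass hd (by rw [(hM i).2, hai, hbi]; simp [eneg]) c hcne
         have ho := h1 i (Or.inr ⟨hai, hbi⟩)
         cases hcid : c i
         · exact absurd hcid hz
         · rfl
         · exact absurd hcid ho)
      · exact h2 i (Or.inr (Or.inr (Or.inr ⟨hai, hbi⟩)))
      · (have hz1 := zero_mass hd (by rw [(hM i).1, hai, hbi]; simp [eone]) c hcne
         have hz2 := zero_mass hd (by rw [(hM i).2, hai, hbi]; simp [eneg]) c hcne
         cases hcid : c i
         · exact absurd hcid hz2
         · rfl
         · exact absurd hcid hz1)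
      · exact h2 i (Or.inr (Or.inl ⟨hai, hbi⟩))
      · (have hz := zero_mass hd (by rw [(hM i).2, hai, hbi]; simp [eneg]) c hcne
         have ho := h1 i (Or.inl ⟨hai, hbi⟩)
         cases hcid : c i
         · exact absurd hcid hz
         · rfl
         · exact absurd hcid ho)
      · exact h2 i (Or.inl ⟨hai, hbi⟩)
      · exact full_mass hd (by rw [(hM i).1, hai, hbi]; simp [eone]) c hcne

end Stmt9Aux

namespace Stmt9Aux

lemma exists_t1n {n : ℕ} {a b : Fin n → D3} (h : vjoin0 a b ≠ vjoin1 a b) :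
    ∃ i, (a i = D3.one ∧ b i = D3.neg) ∨ (a i = D3.neg ∧ b i = D3.one) := by
  obtain ⟨i, hi⟩ := Function.ne_iff.mp h
  refine ⟨i, ?_⟩
  revert hi
  cases hai : a i <;> cases hbi : b i <;>
    simp [vjoin0, vjoin1, D3.join0, D3.join1, hai, hbi]

lemma exists_half {n : ℕ} {a b : Fin n → D3} (h : vmeet0 a b ≠ vjoin0 a b) :
    ∃ i, (a i = D3.one ∧ b i = D3.zero) ∨ (a i = D3.zero ∧ b i = D3.one)
      ∨ (a i = D3.neg ∧ b i = D3.zero) ∨ (a i = D3.zero ∧ b i = D3.neg) := by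
  obtain ⟨i, hi⟩ := Function.ne_iff.mp h
  refine ⟨i, ?_⟩
  revert hi
  cases hai : a i <;> cases hbi : b i <;>
    simp [vmeet0, vjoin0, D3.meet0, D3.join0, hai, hbi]

lemma t1n_vals {n : ℕ} {a b : Fin n → D3} {i : Fin n}
    (h : (a i = D3.one ∧ b i = D3.neg) ∨ (a i = D3.neg ∧ b i = D3.one)) :
    vmeet0 a b i = D3.zero ∧ vjoin0 a b i = D3.zero ∧ vjoin1 a b i = D3.one := by
  rcases h with ⟨h1, h2⟩ | ⟨h1, h2⟩ <;>
    simp [vmeet0, vjoin0, vjoin1, D3.meet0, D3.join0, D3.join1, h1, h2]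

lemma half_pack {α : ℝ} (hα : α ∈ Set.Ioc (0 : ℝ) 1) {n : ℕ} {a b : Fin n → D3}
    {lam : (Fin n → D3) → ℝ} (hd : IsDist n lam) (hc : ChainSupp n lam)
    (hm : HasMarginal α n lam (fun i => (D3.emb α (a i) + D3.emb α (b i)) / 2)) {i : Fin n}
    (h : (a i = D3.one ∧ b i = D3.zero) ∨ (a i = D3.zero ∧ b i = D3.one)
      ∨ (a i = D3.neg ∧ b i = D3.zero) ∨ (a i = D3.zero ∧ b i = D3.neg)) :
    ∃ v, v ≠ D3.zero ∧ vmeet0 a b i = D3.zero ∧ vjoin0 a b i = v ∧ vjoin1 a b i = v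
      ∧ Mv lam i v = 1/2 := by
  have hM := mass_eq hα hd hc hm i
  rcases h with ⟨h1, h2⟩ | ⟨h1, h2⟩ | ⟨h1, h2⟩ | ⟨h1, h2⟩
  · exact ⟨D3.one, by decide, by simp [vmeet0, D3.meet0, h1, h2],
      by simp [vjoin0, D3.join0, h1, h2], by simp [vjoin1, D3.join1, h1, h2],
      by rw [hM.1, h1, h2]; simp [eone]⟩
  · exact ⟨D3.one, by decide, by simp [vmeet0, D3.meet0, h1, h2],
      by simp [vjoin0, D3.join0, h1, h2], by simp [vjoin1, D3.join1, h1, h2],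
      by rw [hM.1, h1, h2]; simp [eone]⟩
  · exact ⟨D3.neg, by decide, by simp [vmeet0, D3.meet0, h1, h2],
      by simp [vjoin0, D3.join0, h1, h2], by simp [vjoin1, D3.join1, h1, h2],
      by rw [hM.2, h1, h2]; simp [eneg]⟩
  · exact ⟨D3.neg, by decide, by simp [vmeet0, D3.meet0, h1, h2],
      by simp [vjoin0, D3.join0, h1, h2], by simp [vjoin1, D3.join1, h1, h2],
      by rw [hM.2, h1, h2]; simp [eneg]⟩

lemma lam_j1 {α : ℝ} (hα : α ∈ Set.Ioc (0 : ℝ) 1) {n : ℕ} {a b : Fin n → D3}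
    {lam : (Fin n → D3) → ℝ} (hd : IsDist n lam) (hc : ChainSupp n lam)
    (hm : HasMarginal α n lam (fun i => (D3.emb α (a i) + D3.emb α (b i)) / 2)) {i0 : Fin n}
    (hT : (a i0 = D3.one ∧ b i0 = D3.neg) ∨ (a i0 = D3.neg ∧ b i0 = D3.one)) :
    lam (vjoin1 a b) = (1-α)/2 := by
  have hM := mass_eq hα hd hc hm i0
  have hmv : Mv lam i0 D3.one = (1-α)/2 := by
    rcases hT with ⟨h1, h2⟩ | ⟨h1, h2⟩ <;> rw [hM.1, h1, h2] <;> simp [eone]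
  have hvals := t1n_vals hT
  have hkey : Mv lam i0 D3.one = lam (vjoin1 a b) := by
    unfold Mv
    have h0 : ∀ c ∈ (Finset.univ : Finset (Fin n → D3)), c ≠ vjoin1 a b →
        (if c i0 = D3.one then lam c else 0) = 0 := by
      intro c _ hne
      by_cases hlc : lam c = 0
      · split <;> simp [hlc]
      · rcases classify hα hd hc hm c hlc with rfl | rfl | rfl
        · simp [hvals.1]
        · simp [hvals.2.1]
        · exact absurd rfl hne
    rw [Finset.sum_eq_single_of_mem (vjoin1 a b) (Finset.mem_univ _) h0, if_pos hvals.2.2]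
  rw [← hkey, hmv]

lemma lam_pair {α : ℝ} (hα : α ∈ Set.Ioc (0 : ℝ) 1) {n : ℕ} {a b : Fin n → D3}
    {lam : (Fin n → D3) → ℝ} (hd : IsDist n lam) (hc : ChainSupp n lam)
    (hm : HasMarginal α n lam (fun i => (D3.emb α (a i) + D3.emb α (b i)) / 2)) {i1 : Fin n}
    (hH : (a i1 = D3.one ∧ b i1 = D3.zero) ∨ (a i1 = D3.zero ∧ b i1 = D3.one)
      ∨ (a i1 = D3.neg ∧ b i1 = D3.zero) ∨ (a i1 = D3.zero ∧ b i1 = D3.neg)) :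
    ∑ c ∈ ({vjoin0 a b, vjoin1 a b} : Finset (Fin n → D3)), lam c = 1/2 := by
  obtain ⟨v, hvne, hmz, hj0v, hj1v, hmv⟩ := half_pack hα hd hc hm hH
  have hside : ∀ c ∈ (Finset.univ : Finset (Fin n → D3)),
      c ∉ ({vjoin0 a b, vjoin1 a b} : Finset (Fin n → D3)) →
      (if c i1 = v then lam c else 0) = 0 := by
    intro c _ hcnot
    by_cases hlc : lam c = 0
    · split <;> simp [hlc]
    · rcases classify hα hd hc hm c hlc with rfl | rfl | rfl
      · simp [hmz, Ne.symm hvne]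
      · exact absurd (Finset.mem_insert_self _ _) hcnot
      · exact absurd (by simp) hcnot
  have hkey : Mv lam i1 v = ∑ c ∈ ({vjoin0 a b, vjoin1 a b} : Finset (Fin n → D3)), lam c := by
    unfold Mv
    rw [← Finset.sum_subset (Finset.subset_univ _) hside]
    apply Finset.sum_congr rfl
    intro c hcmem
    rcases Finset.mem_insert.mp hcmem with rfl | hmem
    · rw [if_pos hj0v]
    · rw [Finset.mem_singleton.mp hmem, if_pos hj1v]
  rw [← hkey, hmv]

end Stmt9Aux

open Stmt9Aux in
/-- the three-point distribution has marginal `(a+b)/2`; if the three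
points form a chain, `f^L((a+b)/2)` is the corresponding combination. -/
theorem stmt9 (α : ℝ) (hα : α ∈ Set.Ioc (0 : ℝ) 1) (n : ℕ) (f : (Fin n → D3) → ℝ)
    (a b : Fin n → D3) :
    HasMarginal α n
      (fun c => (if c = vmeet0 a b then (1 : ℝ) / 2 else 0)
        + (if c = vjoin0 a b then α / 2 else 0)
        + (if c = vjoin1 a b then (1 - α) / 2 else 0))
      (fun i => (D3.emb α (a i) + D3.emb α (b i)) / 2) ∧
    (ChainSupp n
        (fun c => (if c = vmeet0 a b then (1 : ℝ) / 2 else 0)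
          + (if c = vjoin0 a b then α / 2 else 0)
          + (if c = vjoin1 a b then (1 - α) / 2 else 0)) →
      ∀ lam : (Fin n → D3) → ℝ, IsDist n lam →
        HasMarginal α n lam (fun i => (D3.emb α (a i) + D3.emb α (b i)) / 2) →
        ChainSupp n lam →
        ∑ c : Fin n → D3, lam c * f c
          = (1 / 2) * f (vmeet0 a b) + (α / 2) * f (vjoin0 a b)
            + ((1 - α) / 2) * f (vjoin1 a b)) := by
  classical
  constructor
  · -- Part 1: the marginal computation
    intro i
    dsimp only
    have hexp : ∀ c : Fin n → D3,
        ((if c = vmeet0 a b then (1 : ℝ)/2 else 0) + (if c = vjoin0 a b then α/2 else 0)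
          + (if c = vjoin1 a b then (1-α)/2 else 0)) * D3.emb α (c i)
        = (if c = vmeet0 a b then (1 : ℝ)/2 * D3.emb α (c i) else 0)
          + (if c = vjoin0 a b then α/2 * D3.emb α (c i) else 0)
          + (if c = vjoin1 a b then (1-α)/2 * D3.emb α (c i) else 0) := by
      intro c
      split_ifs <;> ring
    rw [Finset.sum_congr rfl fun c _ => hexp c]
    rw [Finset.sum_add_distrib, Finset.sum_add_distrib, Finset.sum_ite_eq',
      Finset.sum_ite_eq', Finset.sum_ite_eq']
    simp only [Finset.mem_univ, if_true]
    have table := meet_join_emb α (a i) (b i)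
    simpa [vmeet0, vjoin0, vjoin1] using table
  · -- Part 2: uniqueness of the chain-supported expectation
    intro _ lam hd hmarg hclam
    have hclass := classify hα hd hclam hmarg
    have hsum3 : ∑ c : Fin n → D3, lam c * f c
        = ∑ c ∈ ({vmeet0 a b, vjoin0 a b, vjoin1 a b} : Finset (Fin n → D3)),
            lam c * f c := by
      symm
      apply Finset.sum_subset (Finset.subset_univ _)
      intro c _ hcnot
      by_cases hlc : lam c = 0
      · simp [hlc]
      · exact absurd (by rcases hclass c hlc with rfl | rfl | rfl <;> simp) hcnot
    have htot : ∑ c ∈ ({vmeet0 a b, vjoin0 a b, vjoin1 a b} : Finset (Fin n → D3)), lam c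
        = 1 := by
      rw [Finset.sum_subset (Finset.subset_univ _) ?side]
      · exact hd.2
      case side =>
        intro c _ hcnot
        by_cases hlc : lam c = 0
        · exact hlc
        · exact absurd (by rcases hclass c hlc with rfl | rfl | rfl <;> simp) hcnot
    by_cases h01 : vjoin0 a b = vjoin1 a b
    · by_cases hm0 : vmeet0 a b = vjoin0 a b
      · -- all three coincide
        have hall : ({vmeet0 a b, vjoin0 a b, vjoin1 a b} : Finset (Fin n → D3))
            = {vmeet0 a b} := by
          rw [← h01, ← hm0]
          simp
        rw [hall, Finset.sum_singleton] at hsum3 htot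
        rw [hsum3, ← h01, ← hm0, htot]
        ring
      · -- m ≠ j0 = j1
        obtain ⟨i1, hH⟩ := exists_half hm0
        have hpair := lam_pair hα hd hclam hmarg hH
        rw [← h01, Finset.pair_eq_singleton, Finset.sum_singleton] at hpair
        have hset : ({vmeet0 a b, vjoin0 a b, vjoin1 a b} : Finset (Fin n → D3))
            = insert (vmeet0 a b) {vjoin0 a b} := by
          rw [← h01, Finset.pair_eq_singleton]
        have hmnot : vmeet0 a b ∉ ({vjoin0 a b} : Finset (Fin n → D3)) := by
          simp [hm0]
        rw [hset, Finset.sum_insert hmnot, Finset.sum_singleton] at hsum3 htot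
        have hlm : lam (vmeet0 a b) = 1/2 := by linarith
        rw [hsum3, hlm, hpair, ← h01]
        ring
    · obtain ⟨i0, hT⟩ := exists_t1n h01
      have hj1 := lam_j1 hα hd hclam hmarg hT
      have hvalsT := t1n_vals hT
      have hmj1 : vmeet0 a b ≠ vjoin1 a b := by
        intro hEq
        have := congrFun hEq i0
        rw [hvalsT.1, hvalsT.2.2] at this
        exact absurd this (by decide)
      by_cases hm0 : vmeet0 a b = vjoin0 a b
      · -- m = j0 ≠ j1
        have hset : ({vmeet0 a b, vjoin0 a b, vjoin1 a b} : Finset (Fin n → D3))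
            = insert (vmeet0 a b) {vjoin1 a b} := by
          rw [hm0, Finset.insert_idem]
        have hmnot : vmeet0 a b ∉ ({vjoin1 a b} : Finset (Fin n → D3)) := by
          simp [hmj1]
        rw [hset, Finset.sum_insert hmnot, Finset.sum_singleton] at hsum3 htot
        have hlm : lam (vmeet0 a b) = (1+α)/2 := by linarith
        rw [hsum3, hlm, hj1, ← hm0]
        ring
      · -- all distinct
        obtain ⟨i1, hH⟩ := exists_half hm0
        have hpair := lam_pair hα hd hclam hmarg hH
        rw [Finset.sum_pair h01] at hpair
        have hmnot : vmeet0 a b ∉ ({vjoin0 a b, vjoin1 a b} : Finset (Fin n → D3)) := by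
          simp only [Finset.mem_insert, Finset.mem_singleton]
          push_neg
          exact ⟨hm0, hmj1⟩
        rw [Finset.sum_insert hmnot, Finset.sum_pair h01] at hsum3 htot
        have hlj0 : lam (vjoin0 a b) = α/2 := by linarith
        have hlm : lam (vmeet0 a b) = 1/2 := by linarith
        rw [hsum3, hlm, hlj0, hj1]
        ring
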